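/- Let K = {x_1, …, x_k} be a coloured k-clique with k ≥ 3 and let A = {m−1, 2m+1}. Then the weight of the Hamiltonian cycle x_1 → x_2 → … → x_k → x_1 belongs to the (k−2)-fold Minkowski sum (k−2)A translated by −(k−3)m; explicitly, the weight equals (k−2−i)(m−1) + i(2m+1) − (k−3)m = (m+2−k) + i(m+2) for some integer i with 0 ≤ i ≤ k−2. -/
import Mathlib


namespace MutClassAn

open Finset

variable {V : Type} [Fintype V] [DecidableEq V]

/-- `M i j c` is the number of arrows from `i` to `j` of colour `c`.
An `m`-coloured quiver has no loops, is monochromatic and skew-symmetric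
(`c.rev = m - c` in `Fin (m+1)`). -/
def IsColouredQuiver {m : ℕ} (M : V → V → Fin (m + 1) → ℕ) : Prop :=
  (∀ i c, M i i c = 0) ∧
  (∀ i j c c', M i j c ≠ 0 → M i j c' ≠ 0 → c = c') ∧
  (∀ i j c, M i j c = M j i c.rev)

/-- A coloured quiver is simple if there is at most one arrow between any two
vertices in each direction. -/
def IsSimpleCQ {m : ℕ} (M : V → V → Fin (m + 1) → ℕ) : Prop :=
  ∀ i j : V, (∑ c, M i j c) ≤ 1

/-- Adjacency in the underlying graph. -/
def CQAdj {m : ℕ} (M : V → V → Fin (m + 1) → ℕ) (i j : V) : Prop :=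
  i ≠ j ∧ ∃ c, M i j c ≠ 0

/-- The colour of the (unique, for simple quivers) arrow from `i` to `j`. -/
def colourOf {m : ℕ} (M : V → V → Fin (m + 1) → ℕ) (i j : V) : ℕ :=
  ∑ c : Fin (m + 1), M i j c * c.val

/-- Buan–Thomas coloured quiver mutation at the vertex `j`. -/
def mutate {m : ℕ} (M : V → V → Fin (m + 1) → ℕ) (j : V) :
    V → V → Fin (m + 1) → ℕ := fun i k c =>
  if k = j then M i k (c + 1)
  else if i = j then M i k (c - 1)
  else ((M i k c : ℤ) - ∑ t ∈ Finset.univ.filter (fun t => t ≠ c), (M i k t : ℤ)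
      + ((M i j c : ℤ) - (M i j (c - 1) : ℤ)) * (M j k 0 : ℤ)
      + (M i j (Fin.last m) : ℤ) * ((M j k c : ℤ) - (M j k (c + 1) : ℤ))).toNat

/-- Mutation equivalence: the equivalence relation generated by single mutations. -/
def MutEquiv {m : ℕ} (M M' : V → V → Fin (m + 1) → ℕ) : Prop :=
  Relation.EqvGen (fun A B => ∃ v, mutate A v = B) M M'

/-- A hole is an induced cycle of length at least `4` in the underlying graph. -/
def HasHole {m : ℕ} (M : V → V → Fin (m + 1) → ℕ) : Prop :=
  ∃ k : ℕ, 4 ≤ k ∧ ∃ x : ZMod k → V, Function.Injective x ∧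
    (∀ i, CQAdj M (x i) (x (i + 1))) ∧
    ∀ i j : ZMod k, i ≠ j → j ≠ i + 1 → i ≠ j + 1 → ¬ CQAdj M (x i) (x j)

/-- A clique: a set of pairwise adjacent vertices. -/
def IsCliqueCQ {m : ℕ} (M : V → V → Fin (m + 1) → ℕ) (S : Set V) : Prop :=
  S.Pairwise (CQAdj M)

/-- The set of neighbours of a vertex. -/
def nbrs {m : ℕ} (M : V → V → Fin (m + 1) → ℕ) (v : V) : Set V :=
  {u | CQAdj M v u}

/-- Connectedness of the underlying graph. -/
def CQConnected {m : ℕ} (M : V → V → Fin (m + 1) → ℕ) : Prop :=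
  ∀ u w : V, Relation.ReflTransGen (CQAdj M) u w

/-- Condition (1) of the class `𝒬ₙᵐ`: the neighbourhood of every vertex is covered
by two cliques of sizes `r, k ≤ m + 2` with `r + k = z + 2`, with no arrows between
the two cliques away from the vertex. -/
def Cond1 {m : ℕ} (M : V → V → Fin (m + 1) → ℕ) : Prop :=
  ∀ v : V, (nbrs M v).Nonempty →
    ∃ R K : Finset V, v ∈ R ∧ v ∈ K ∧ IsCliqueCQ M ↑R ∧ IsCliqueCQ M ↑K ∧
      R.card + K.card = (nbrs M v).ncard + 2 ∧ R.card ≤ m + 2 ∧ K.card ≤ m + 2 ∧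
      (∀ u ∈ nbrs M v, u ∈ R ∨ u ∈ K) ∧
      ∀ a ∈ R, a ≠ v → ∀ b ∈ K, b ≠ v → ¬ CQAdj M a b

/-- Condition (2) of the class `𝒬ₙᵐ`: every triangle inside a clique has colour
sum `m - 1` along one of its two orientations (sums taken in `ℤ`). -/
def Cond2 {m : ℕ} (M : V → V → Fin (m + 1) → ℕ) : Prop :=
  ∀ v1 v2 v3 : V, v1 ≠ v2 → v2 ≠ v3 → v1 ≠ v3 →
    CQAdj M v1 v2 → CQAdj M v2 v3 → CQAdj M v1 v3 →
    ((colourOf M v2 v1 : ℤ) + (colourOf M v1 v3 : ℤ) + (colourOf M v3 v2 : ℤ)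
        = (m : ℤ) - 1 ∨
      ((m : ℤ) - colourOf M v2 v1) + ((m : ℤ) - colourOf M v1 v3)
          + ((m : ℤ) - colourOf M v3 v2) = (m : ℤ) - 1)

/-- Membership in the class `𝒬ₙᵐ` (`n` being the cardinality of the vertex set). -/
def MemQClass {m : ℕ} (M : V → V → Fin (m + 1) → ℕ) : Prop :=
  IsColouredQuiver M ∧ IsSimpleCQ M ∧ CQConnected M ∧ ¬ HasHole M ∧ Cond1 M ∧ Cond2 M

/-- An `Aₙ`-quiver: the underlying graph is the path graph on the vertex set. -/
def IsAnQuiver {m : ℕ} (M : V → V → Fin (m + 1) → ℕ) : Prop :=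
  ∃ e : Fin (Fintype.card V) ≃ V,
    ∀ i j : Fin (Fintype.card V),
      CQAdj M (e i) (e j) ↔ (i.val + 1 = j.val ∨ j.val + 1 = i.val)

/-- The coloured quiver on `Fin n` whose underlying graph is the path
`0 — 1 — ⋯ — (n-1)`, with the arrow `j+1 → j` coloured `c j` and the arrow
`j → j+1` coloured `m - c j`. -/
def pathQuiver (m n : ℕ) (c : ℕ → Fin (m + 1)) :
    Fin n → Fin n → Fin (m + 1) → ℕ := fun i j d =>
  if j.val + 1 = i.val ∧ d = c j.val then 1
  else if i.val + 1 = j.val ∧ d = (c i.val).rev then 1 else 0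

/-- Delete all arrows between vertices of `S`. -/
def deleteArrows {m : ℕ} (M : V → V → Fin (m + 1) → ℕ) (S : Finset V) :
    V → V → Fin (m + 1) → ℕ := fun i j c =>
  if i ∈ S ∧ j ∈ S then 0 else M i j c

/-- The connected component of `u` is an `A_k`-quiver (a path) for some `k ≥ 1`. -/
def ComponentIsPath {m : ℕ} (M : V → V → Fin (m + 1) → ℕ) (u : V) : Prop :=
  ∃ (k : ℕ) (x : Fin k → V), 1 ≤ k ∧ Function.Injective x ∧
    Set.range x = {w | Relation.ReflTransGen (CQAdj M) u w} ∧
    ∀ i j : Fin k, CQAdj M (x i) (x j) ↔ (i.val + 1 = j.val ∨ j.val + 1 = i.val)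

/-- An almost extremal clique: deleting its arrows leaves a connected component
which is an `A_k`-quiver for some `k ≥ 1`. -/
def AlmostExtremalClique {m : ℕ} (M : V → V → Fin (m + 1) → ℕ) (S : Finset V) : Prop :=
  IsCliqueCQ M ↑S ∧ ∃ u : V, ComponentIsPath (deleteArrows M S) u

/-- An extremal clique: deleting its arrows leaves a single-vertex component. -/
def ExtremalClique {m : ℕ} (M : V → V → Fin (m + 1) → ℕ) (S : Finset V) : Prop :=
  IsCliqueCQ M ↑S ∧
    ∃ u : V, {w | Relation.ReflTransGen (CQAdj (deleteArrows M S)) u w} = {u}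

/-- A coloured clique structure on a vertex type: colours `c i j ∈ {0,…,m}` with
skew-symmetry `c j i = m - c i j` and the triangle condition. -/
def IsCliqueColouring (m : ℕ) {W : Type} (c : W → W → ℕ) : Prop :=
  (∀ i j : W, i ≠ j → c i j ≤ m) ∧
  (∀ i j : W, i ≠ j → c i j + c j i = m) ∧
  ∀ i j l : W, i ≠ j → j ≠ l → i ≠ l →
    ((c i j : ℤ) + (c j l : ℤ) + (c l i : ℤ) = (m : ℤ) - 1 ∨
      (c i j : ℤ) + (c j l : ℤ) + (c l i : ℤ) = 2 * (m : ℤ) + 1)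

/-- Cyclic successor in `Fin k`. -/
def cyc {k : ℕ} (i : Fin k) : Fin k :=
  ⟨(i.val + 1) % k, Nat.mod_lt _ i.pos⟩

/-- The weight of the Hamiltonian cycle `x 0 → x 1 → ⋯ → x (k-1) → x 0`:
the sum of the colours of its arrows. -/
def cycleWeight {W : Type} (c : W → W → ℕ) {k : ℕ} (x : Fin k → W) : ℤ :=
  ∑ i : Fin k, (c (x i) (x (cyc i)) : ℤ)

/-- The Hamiltonian cycle on `k+1` vertices obtained from the cycle
`x 0 → ⋯ → x (k-1) → x 0` by inserting the vertex `x (Fin.last k)`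
immediately after `x j`. -/
def insertAfter {W : Type} {k : ℕ} (x : Fin (k + 1) → W) (j : Fin k) :
    Fin (k + 1) → W := fun i =>
  if i = 0 then x (Fin.last k)
  else x (Fin.castSucc ⟨(j.val + i.val) % k, Nat.mod_lt _ j.pos⟩)

/-- The weight of a Hamiltonian cycle in a coloured `k`-clique belongs to the
`(k-2)`-fold Minkowski sum of `{m-1, 2m+1}` translated by `-(k-3)m`: it equals
`(k-2-i)(m-1) + i(2m+1) - (k-3)m = (m+2-k) + i(m+2)` for some `0 ≤ i ≤ k-2`. -/
theorem cycleWeight_mem_minkowski (m k : ℕ) (hm : 1 ≤ m) (hk : 3 ≤ k)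
    (W : Type) [Fintype W] (hcard : Fintype.card W = k)
    (c : W → W → ℕ) (hc : IsCliqueColouring m c)
    (x : Fin k → W) (hx : Function.Bijective x) :
    ∃ i : ℕ, i ≤ k - 2 ∧
      cycleWeight c x
        = ((k : ℤ) - 2 - i) * ((m : ℤ) - 1) + (i : ℤ) * (2 * (m : ℤ) + 1)
            - ((k : ℤ) - 3) * (m : ℤ) ∧
      cycleWeight c x = ((m : ℤ) + 2 - k) + (i : ℤ) * ((m : ℤ) + 2) := by

  obtain ⟨n, rfl⟩ : ∃ n, k = n + 3 := ⟨k - 3, by omega⟩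
  have hk0 : 0 < n + 3 := by omega
  set y : ℕ → W := fun i => x ⟨i % (n+3), Nat.mod_lt _ hk0⟩ with hy
  have hyne : ∀ a b : ℕ, a < n + 3 → b < n + 3 → a ≠ b → y a ≠ y b := by
    intro a b ha hb hab hcon
    apply hab
    have := congrArg Fin.val (hx.injective hcon)
    simpa [Nat.mod_eq_of_lt ha, Nat.mod_eq_of_lt hb] using this
  have skew : ∀ u v : W, u ≠ v → (c u v : ℤ) + (c v u : ℤ) = (m : ℤ) := by
    intro u v h
    exact_mod_cast hc.2.1 u v h
  set f : ℕ → ℤ := fun i => (c (y i) (y (i+1)) : ℤ) with hf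
  set g : ℕ → ℤ := fun i => (c (y 0) (y i) : ℤ) with hg
  set b : ℕ → ℕ := fun i =>
    if (c (y 0) (y i) : ℤ) + (c (y i) (y (i+1)) : ℤ) + (c (y (i+1)) (y 0) : ℤ)
        = 2*(m:ℤ)+1 then 1 else 0 with hb
  have hb1 : ∀ i, b i ≤ 1 := by
    intro i
    simp only [hb]
    split <;> omega
  have hcw : cycleWeight c x = ∑ i ∈ Finset.range (n+3), f i := by
    unfold cycleWeight
    rw [← Fin.sum_univ_eq_sum_range f (n+3)]
    apply Finset.sum_congr rfl
    intro i _
    have h1 : y i.val = x i := by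
      simp only [hy]
      congr 1
      exact Fin.ext (Nat.mod_eq_of_lt i.isLt)
    have h2 : y (i.val + 1) = x (cyc i) := rfl
    simp only [hf, h1, h2]
  have key : ∀ i, 1 ≤ i → i ≤ n + 1 →
      f i = ((m:ℤ) - 1) + (b i : ℤ) * ((m:ℤ) + 2) + (g (i+1) - g i) - m := by
    intro i h1 h2
    have d1 : y 0 ≠ y i := hyne 0 i (by omega) (by omega) (by omega)
    have d2 : y i ≠ y (i+1) := hyne i (i+1) (by omega) (by omega) (by omega)
    have d3 : y 0 ≠ y (i+1) := hyne 0 (i+1) (by omega) (by omega) (by omega)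
    have tri := hc.2.2 (y 0) (y i) (y (i+1)) d1 d2 d3
    have sk := skew (y (i+1)) (y 0) d3.symm
    simp only [hf, hg, hb]
    rcases tri with h | h
    · rw [if_neg (by omega)]
      push_cast
      linarith
    · rw [if_pos h]
      push_cast
      linarith
  have hsplit : ∑ i ∈ Finset.range (n+3), f i
      = f 0 + (∑ i ∈ Finset.range (n+1), f (i+1)) + f (n+2) := by
    rw [Finset.sum_range_succ, Finset.sum_range_succ']
    ring
  have htel : ∑ i ∈ Finset.range (n+1), (g (i+2) - g (i+1)) = g (n+2) - g 1 := by
    have := Finset.sum_range_sub (fun i => g (i+1)) (n+1)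
    simpa using this
  set I : ℕ := ∑ i ∈ Finset.range (n+1), b (i+1) with hIdef
  have hIle : I ≤ n + 1 := by
    calc I ≤ ∑ _i ∈ Finset.range (n+1), 1 :=
          Finset.sum_le_sum (fun i _ => hb1 (i+1))
      _ = n + 1 := by simp
  have hIcast : (I : ℤ) = ∑ i ∈ Finset.range (n+1), (b (i+1) : ℤ) := by
    rw [hIdef]; exact Nat.cast_sum _ _
  have hmidval : ∑ i ∈ Finset.range (n+1), f (i+1)
      = ((n:ℤ)+1) * (-1) + (I:ℤ) * ((m:ℤ)+2) + (g (n+2) - g 1) := by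
    have hmid : ∑ i ∈ Finset.range (n+1), f (i+1)
        = ∑ i ∈ Finset.range (n+1),
            (((m:ℤ) - 1) + (b (i+1) : ℤ) * ((m:ℤ) + 2) + (g (i+2) - g (i+1)) - m) :=
      Finset.sum_congr rfl (fun i hi => key (i+1) (by omega)
        (by have := Finset.mem_range.mp hi; omega))
    have hconst : ((n:ℤ)+1) * (-1) = ∑ _i ∈ Finset.range (n+1), (-1 : ℤ) := by
      simp
    rw [hmid, hIcast, ← htel, Finset.sum_mul, hconst,
      ← Finset.sum_add_distrib, ← Finset.sum_add_distrib]
    exact Finset.sum_congr rfl (fun i _ => by ring)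
  have hf0 : f 0 = g 1 := rfl
  have hfe : f (n+2) = (m:ℤ) - g (n+2) := by
    have hy3 : y (n+3) = y 0 := by
      simp only [hy]
      congr 1
      exact Fin.ext (by simp [Nat.mod_self])
    have d : y (n+2) ≠ y 0 := hyne (n+2) 0 (by omega) (by omega) (by omega)
    have sk := skew (y (n+2)) (y 0) d
    simp only [hf, hg] at *
    rw [hy3] at *
    linarith
  have hw : cycleWeight c x = -((n:ℤ)+1) + (I:ℤ) * ((m:ℤ)+2) + (m:ℤ) := by
    rw [hcw, hsplit, hmidval, hf0, hfe]
    ring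
  refine ⟨I, by omega, ?_, ?_⟩
  · rw [hw]; push_cast; ring
  · rw [hw]; push_cast; ring

end MutClassAn
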